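/- Let (u_n) be a sequence in S^d with finite uniform covering parameter R_d(U, C) < ∞ for some C > 0. Then the spiral { n^{1/(d+1)}·u_n : n ≥ 1 } is a uniform orchard with visibility function V(ε) = C_U·ε^{−d} for some constant C_U > 0. -/

import Mathlib

noncomputable section

def gdist {d : ℕ} (u v : EuclideanSpace ℝ (Fin (d+1))) : ℝ :=
  Real.arccos (inner ℝ u v)

def spiral {d : ℕ} (u : ℕ → EuclideanSpace ℝ (Fin (d+1))) :
    Set (EuclideanSpace ℝ (Fin (d+1))) :=
  {x | ∃ n : ℕ, 1 ≤ n ∧ x = ((n : ℝ) ^ ((1:ℝ)/((d:ℝ)+1))) • u n}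

def FiniteDensity {d : ℕ} (S : Set (EuclideanSpace ℝ (Fin (d+1)))) : Prop :=
  ∃ C > (0:ℝ), ∀ T ≥ (1:ℝ),
    ((S ∩ Metric.closedBall 0 T).ncard : ℝ) ≤ C * T ^ (d+1)

def IsUniformOrchard {d : ℕ} (O : Set (EuclideanSpace ℝ (Fin (d+1)))) (V : ℝ → ℝ) : Prop :=
  FiniteDensity O ∧
    ∀ ε ∈ Set.Ioo (0:ℝ) 1, ∀ t₀ : ℝ, ∀ v : EuclideanSpace ℝ (Fin (d+1)), ‖v‖ = 1 →
      ∃ o ∈ O, ∃ t : ℝ, t₀ < t ∧ t < t₀ + V ε ∧ ‖o - t • v‖ ≤ ε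

/-- Finiteness of the uniform covering parameter `R_d(U, C)`: there is `R`
such that for every direction `v`, every `m ≥ 0` and every `N ≥ 1`, some term
`u_{m+n}` with `1 ≤ n ≤ C·N` is within geodesic distance `R / N^{1/d}` of `v`. -/
def FiniteCoveringParameter {d : ℕ} (u : ℕ → EuclideanSpace ℝ (Fin (d+1))) (C : ℝ) : Prop :=
  ∃ R : ℝ, ∀ v : EuclideanSpace ℝ (Fin (d+1)), ‖v‖ = 1 → ∀ m : ℕ, ∀ N : ℕ, 1 ≤ N →
    ∃ n : ℕ, 1 ≤ n ∧ (n : ℝ) ≤ C * N ∧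
      gdist (u (m + n)) v ≤ R / (N : ℝ) ^ ((1:ℝ)/(d:ℝ))

lemma chord_le_gdist {d : ℕ} (u v : EuclideanSpace ℝ (Fin (d+1)))
    (hu : ‖u‖ = 1) (hv : ‖v‖ = 1) : ‖u - v‖ ≤ gdist u v := by
  have h1 : |(inner ℝ u v : ℝ)| ≤ 1 := by
    have := abs_real_inner_le_norm u v
    rwa [hu, hv, one_mul] at this
  set θ := gdist u v with hθ
  have hθ0 : 0 ≤ θ := Real.arccos_nonneg _
  have hcos : Real.cos θ = inner ℝ u v :=
    Real.cos_arccos (neg_le_of_abs_le h1) (le_of_abs_le h1)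
  have hsq : ‖u - v‖ ^ 2 = 2 - 2 * Real.cos θ := by
    have h2 := norm_sub_sq_real u v
    rw [hu, hv] at h2
    rw [hcos]; rw [h2]; ring
  have hle : ‖u - v‖ ^ 2 ≤ θ ^ 2 := by
    have := Real.one_sub_sq_div_two_le_cos (x := θ)
    nlinarith
  exact (abs_le_of_sq_le_sq' hle hθ0).2

set_option maxHeartbeats 1000000 in
/-- The key step: find a spiral point at distance in `(b, b+L]` whose direction
is `ε/(b+L)`-close (geodesically) to `w`. -/
lemma key_step {d : ℕ} (hd : 1 ≤ d) (u : ℕ → EuclideanSpace ℝ (Fin (d+1)))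
    (C : ℝ) (hC : 0 < C) (R' : ℝ) (hR1 : 1 ≤ R')
    (hspec : ∀ w : EuclideanSpace ℝ (Fin (d+1)), ‖w‖ = 1 → ∀ m : ℕ, ∀ N : ℕ, 1 ≤ N →
      ∃ n : ℕ, 1 ≤ n ∧ (n : ℝ) ≤ C * N ∧
        gdist (u (m + n)) w ≤ R' / (N : ℝ) ^ ((1:ℝ)/(d:ℝ)))
    (b : ℝ) (hb : 0 ≤ b) (w : EuclideanSpace ℝ (Fin (d+1))) (hw : ‖w‖ = 1)
    (ε : ℝ) (hε : ε ∈ Set.Ioo (0:ℝ) 1)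
    (L : ℝ) (hL : L = (C * R'^d + 2*C + 1) * ε ^ (-(d:ℝ))) :
    ∃ n : ℕ, 1 ≤ n ∧ b < (n:ℝ) ^ ((1:ℝ)/((d:ℝ)+1)) ∧
      (n:ℝ) ^ ((1:ℝ)/((d:ℝ)+1)) ≤ b + L ∧ gdist (u n) w ≤ ε / (b + L) := by
  obtain ⟨hε0, hε1⟩ := hε
  set E : ℝ := (ε ^ d)⁻¹ with hEdef
  have hεd : 0 < ε ^ d := pow_pos hε0 d
  have hE : ε ^ (-(d:ℝ)) = E := by
    rw [hEdef, ← Real.rpow_natCast ε d, ← Real.rpow_neg hε0.le]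
  have hE1 : 1 ≤ E := by
    rw [hEdef, le_inv_comm₀ one_pos hεd]
    simpa using pow_le_one₀ hε0.le hε1.le
  have hRd : 1 ≤ R' ^ d := one_le_pow₀ hR1
  have hA : 1 ≤ C * R'^d + 2*C + 1 := by nlinarith
  have hL1 : 1 ≤ L := by
    rw [hL, hE]; nlinarith
  have hbL1 : 1 ≤ b + L := by linarith
  have hbL0 : 0 < b + L := by linarith
  have hbLd : 1 ≤ (b + L) ^ d := one_le_pow₀ hbL1
  -- index shift
  set m : ℕ := ⌈b ^ (d+1)⌉₊ with hmdef
  have hm1 : b ^ (d+1) ≤ (m:ℝ) := Nat.le_ceil _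
  have hm2 : (m:ℝ) ≤ b ^ (d+1) + 1 :=
    le_of_lt (Nat.ceil_lt_add_one (by positivity))
  -- resolution
  set K : ℝ := (R' * (b + L) / ε) ^ d with hKdef
  have hbase : 1 ≤ R' * (b + L) / ε := by
    rw [le_div_iff₀ hε0]
    nlinarith
  have hK1 : 1 ≤ K := one_le_pow₀ hbase
  set N : ℕ := ⌈K⌉₊ with hNdef
  have hN1 : 1 ≤ N := by
    rw [hNdef, Nat.one_le_ceil_iff]; linarith
  have hNK : K ≤ (N:ℝ) := Nat.le_ceil _
  have hN2 : (N:ℝ) ≤ K + 1 := le_of_lt (Nat.ceil_lt_add_one (by linarith))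
  have hKe : K = R'^d * (b + L)^d * E := by
    rw [hKdef, hEdef, div_pow, mul_pow, div_eq_mul_inv]
  -- the window contains the needed indices
  have hmN : (m:ℝ) + C * N ≤ (b + L) ^ (d+1) := by
    have h5 : (b + L) ^ (d+1) = b * (b+L)^d + L * (b+L)^d := by
      rw [pow_succ]; ring
    have h6 : b ^ (d+1) ≤ b * (b+L)^d := by
      rw [pow_succ]
      have : b ^ d ≤ (b+L)^d := pow_le_pow_left₀ hb (by linarith) d
      nlinarith
    have hCN : C * (N:ℝ) ≤ C * (K + 1) := mul_le_mul_of_nonneg_left hN2 hC.le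
    have hx : 1 ≤ E * (b+L)^d := by nlinarith
    have hLs : L * (b+L)^d = C * (R'^d * (b+L)^d * E) + (2*C+1) * (E * (b+L)^d) := by
      rw [hL, hE]; ring
    have hx2 : (2*C+1) * 1 ≤ (2*C+1) * (E * (b+L)^d) :=
      mul_le_mul_of_nonneg_left hx (by linarith)
    have hKC : C * K = C * (R'^d * (b+L)^d * E) := by rw [hKe]
    linarith
  obtain ⟨k, hk1, hk2, hk3⟩ := hspec w hw m N hN1
  refine ⟨m + k, by omega, ?_, ?_, ?_⟩
  · -- lower bound
    have hlt : b ^ (d+1) < ((m + k : ℕ) : ℝ) := by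
      push_cast
      have : (1:ℝ) ≤ (k:ℝ) := by exact_mod_cast hk1
      linarith
    have hexp : (1:ℝ)/((d:ℝ)+1) = ((d+1:ℕ):ℝ)⁻¹ := by push_cast; rw [one_div]
    rw [hexp]
    calc b = (b ^ (d+1)) ^ (((d+1:ℕ):ℝ)⁻¹) :=
          (Real.pow_rpow_inv_natCast hb (Nat.succ_ne_zero d)).symm
      _ < ((m + k : ℕ) : ℝ) ^ (((d+1:ℕ):ℝ)⁻¹) := by
          apply Real.rpow_lt_rpow (by positivity) hlt
          positivity
  · -- upper bound
    have hle : ((m + k : ℕ) : ℝ) ≤ (b + L) ^ (d+1) := by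
      push_cast; linarith
    have hexp : (1:ℝ)/((d:ℝ)+1) = ((d+1:ℕ):ℝ)⁻¹ := by push_cast; rw [one_div]
    rw [hexp]
    calc ((m + k : ℕ) : ℝ) ^ (((d+1:ℕ):ℝ)⁻¹)
        ≤ ((b + L) ^ (d+1)) ^ (((d+1:ℕ):ℝ)⁻¹) := by
          apply Real.rpow_le_rpow (by positivity) hle (by positivity)
      _ = b + L := Real.pow_rpow_inv_natCast hbL0.le (Nat.succ_ne_zero d)
  · -- geodesic closeness
    have hdne : d ≠ 0 := by omega
    have hexp : (1:ℝ)/(d:ℝ) = ((d:ℕ):ℝ)⁻¹ := by rw [one_div]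
    have hNd : R' * (b + L) / ε ≤ (N:ℝ) ^ ((1:ℝ)/(d:ℝ)) := by
      rw [hexp]
      calc R' * (b + L) / ε = (K) ^ (((d:ℕ):ℝ)⁻¹) :=
            (Real.pow_rpow_inv_natCast (by positivity) hdne).symm
        _ ≤ (N:ℝ) ^ (((d:ℕ):ℝ)⁻¹) := by
            apply Real.rpow_le_rpow (by positivity) hNK (by positivity)
    have hNpos : (0:ℝ) < (N:ℝ) ^ ((1:ℝ)/(d:ℝ)) := by
      apply Real.rpow_pos_of_pos
      exact_mod_cast hN1
    have hb0 : 0 < R' * (b + L) / ε := by positivity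
    calc gdist (u (m + k)) w ≤ R' / (N:ℝ) ^ ((1:ℝ)/(d:ℝ)) := hk3
      _ ≤ R' / (R' * (b + L) / ε) := by
          apply div_le_div_of_nonneg_left (by linarith) hb0 hNd
      _ = ε / (b + L) := by
          field_simp

set_option maxHeartbeats 1000000 in
theorem finite_covering_param_uniform_orchard (d : ℕ) (hd : 1 ≤ d)
    (u : ℕ → EuclideanSpace ℝ (Fin (d+1))) (hu : ∀ n, ‖u n‖ = 1)
    (C : ℝ) (hC : 0 < C) (hR : FiniteCoveringParameter u C) :
    ∃ CU > (0:ℝ), IsUniformOrchard (spiral u) (fun ε => CU * ε ^ (-(d:ℝ))) := by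
  obtain ⟨R, hRspec⟩ := hR
  set R' : ℝ := max R 1 with hR'def
  have hR1 : 1 ≤ R' := le_max_right _ _
  have hspec : ∀ w : EuclideanSpace ℝ (Fin (d+1)), ‖w‖ = 1 → ∀ m : ℕ, ∀ N : ℕ, 1 ≤ N →
      ∃ n : ℕ, 1 ≤ n ∧ (n : ℝ) ≤ C * N ∧
        gdist (u (m + n)) w ≤ R' / (N : ℝ) ^ ((1:ℝ)/(d:ℝ)) := by
    intro w hw m N hN
    obtain ⟨n, h1, h2, h3⟩ := hRspec w hw m N hN
    refine ⟨n, h1, h2, h3.trans ?_⟩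
    have hNpos : (0:ℝ) < (N:ℝ) ^ ((1:ℝ)/(d:ℝ)) :=
      Real.rpow_pos_of_pos (by exact_mod_cast hN) _
    gcongr
    exact le_max_left _ _
  set A : ℝ := C * R'^d + 2*C + 1 with hAdef
  have hRd : 1 ≤ R' ^ d := one_le_pow₀ hR1
  have hA1 : 1 ≤ A := by rw [hAdef]; nlinarith
  refine ⟨4 * A, by linarith, ?_, ?_⟩
  · -- finite density
    refine ⟨1, one_pos, ?_⟩
    intro T hT
    set M : ℕ := ⌊T ^ (d+1)⌋₊ with hMdef
    have hsub : spiral u ∩ Metric.closedBall 0 T ⊆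
        (fun n : ℕ => ((n:ℝ) ^ ((1:ℝ)/((d:ℝ)+1))) • u n) '' (Set.Icc 1 M) := by
      rintro x ⟨⟨n, hn1, rfl⟩, hxb⟩
      have hc0 : (0:ℝ) ≤ (n:ℝ) ^ ((1:ℝ)/((d:ℝ)+1)) := Real.rpow_nonneg (Nat.cast_nonneg n) _
      have hnorm : ‖((n:ℝ) ^ ((1:ℝ)/((d:ℝ)+1))) • u n‖ = (n:ℝ) ^ ((1:ℝ)/((d:ℝ)+1)) := by
        rw [norm_smul, hu n, mul_one, Real.norm_eq_abs, abs_of_nonneg hc0]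
      have hxT : (n:ℝ) ^ ((1:ℝ)/((d:ℝ)+1)) ≤ T := by
        rw [Metric.mem_closedBall, dist_zero_right, hnorm] at hxb
        exact hxb
      have hexp : (1:ℝ)/((d:ℝ)+1) = ((d+1:ℕ):ℝ)⁻¹ := by push_cast; rw [one_div]
      have hnT : (n:ℝ) ≤ T ^ (d+1) := by
        calc (n:ℝ) = (((n:ℝ) ^ (((d+1:ℕ):ℝ)⁻¹)) ^ (d+1)) :=
              (Real.rpow_inv_natCast_pow (Nat.cast_nonneg n) (Nat.succ_ne_zero d)).symm
          _ ≤ T ^ (d+1) := by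
              apply pow_le_pow_left₀ (by positivity)
              rw [← hexp]; exact hxT
      have hnM : n ≤ M := Nat.le_floor hnT
      exact ⟨n, ⟨hn1, hnM⟩, rfl⟩
    have hfin : (Set.Icc 1 M).Finite := Set.finite_Icc _ _
    have h1 : (spiral u ∩ Metric.closedBall 0 T).ncard ≤
        ((fun n : ℕ => ((n:ℝ) ^ ((1:ℝ)/((d:ℝ)+1))) • u n) '' (Set.Icc 1 M)).ncard :=
      Set.ncard_le_ncard hsub (hfin.image _)
    have h2 : ((fun n : ℕ => ((n:ℝ) ^ ((1:ℝ)/((d:ℝ)+1))) • u n) '' (Set.Icc 1 M)).ncard ≤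
        (Set.Icc 1 M).ncard := Set.ncard_image_le hfin
    have h3 : (Set.Icc 1 M).ncard = M := by simp [Set.ncard_eq_toFinset_card']
    have h4 : (M:ℝ) ≤ T ^ (d+1) := Nat.floor_le (by positivity)
    rw [one_mul]
    calc ((spiral u ∩ Metric.closedBall 0 T).ncard : ℝ) ≤ (M:ℝ) := by
          exact_mod_cast (h1.trans h2).trans h3.le
      _ ≤ T ^ (d+1) := h4
  · -- covering
    intro ε hε t₀ v hv
    set e : ℝ := ε ^ (-(d:ℝ)) with hedef
    have he1 : 1 ≤ e :=
      Real.one_le_rpow_of_pos_of_le_one_of_nonpos hε.1 hε.2.le (neg_nonpos.mpr (by positivity))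
    set L : ℝ := A * e with hLdef
    have hLA : L = (C * R'^d + 2*C + 1) * ε ^ (-(d:ℝ)) := by rw [hLdef, hAdef, hedef]
    have hL1 : 1 ≤ L := by rw [hLdef]; nlinarith
    set V : ℝ := 4 * A * e with hVdef
    have hVL : V = 4 * L := by rw [hVdef, hLdef]; ring
    have hV0 : 0 < V := by rw [hVL]; linarith
    show ∃ o ∈ spiral u, ∃ t : ℝ, t₀ < t ∧ t < t₀ + 4 * A * ε ^ (-(d:ℝ)) ∧ ‖o - t • v‖ ≤ ε
    have hgoalV : 4 * A * ε ^ (-(d:ℝ)) = V := by rw [hVdef, hedef]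
    rw [hgoalV]
    by_cases hcase : -V/2 ≤ t₀
    · -- positive-direction case
      set b : ℝ := max t₀ 0 with hbdef
      have hb : 0 ≤ b := le_max_right _ _
      obtain ⟨n, hn1, hlow, hhigh, hgd⟩ :=
        key_step hd u C hC R' hR1 hspec b hb v hv ε hε L hLA
      set t : ℝ := (n:ℝ) ^ ((1:ℝ)/((d:ℝ)+1)) with htdef
      have ht0 : 0 ≤ t := Real.rpow_nonneg (Nat.cast_nonneg n) _
      have hbL0 : 0 < b + L := by linarith
      refine ⟨t • u n, ⟨n, hn1, rfl⟩, t, ?_, ?_, ?_⟩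
      · exact lt_of_le_of_lt (le_max_left t₀ 0) hlow
      · have hmax : b + L < t₀ + V := by
          rcases le_total t₀ 0 with h|h
          · rw [hbdef, max_eq_right h]; linarith
          · rw [hbdef, max_eq_left h]; linarith
        linarith
      · have heq : t • u n - t • v = t • (u n - v) := (smul_sub t (u n) v).symm
        rw [heq, norm_smul, Real.norm_eq_abs, abs_of_nonneg ht0]
        have hch : ‖u n - v‖ ≤ gdist (u n) v := chord_le_gdist _ _ (hu n) hv
        calc t * ‖u n - v‖ ≤ (b + L) * (ε / (b + L)) :=
              mul_le_mul hhigh (hch.trans hgd) (norm_nonneg _) hbL0.le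
          _ = ε := mul_div_cancel₀ ε hbL0.ne'
    · -- negative-direction case
      push_neg at hcase
      set b : ℝ := max (-(t₀ + V)) 0 with hbdef
      have hb : 0 ≤ b := le_max_right _ _
      have hvn : ‖-v‖ = 1 := by rw [norm_neg, hv]
      obtain ⟨n, hn1, hlow, hhigh, hgd⟩ :=
        key_step hd u C hC R' hR1 hspec b hb (-v) hvn ε hε L hLA
      set s : ℝ := (n:ℝ) ^ ((1:ℝ)/((d:ℝ)+1)) with hsdef
      have hs0 : 0 ≤ s := Real.rpow_nonneg (Nat.cast_nonneg n) _
      have hbL0 : 0 < b + L := by linarith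
      refine ⟨s • u n, ⟨n, hn1, rfl⟩, -s, ?_, ?_, ?_⟩
      · have hsub : s ≤ b + L := hhigh
        have hmax : b + L < -t₀ := by
          rcases le_total (-(t₀ + V)) 0 with h|h
          · rw [hbdef, max_eq_right h]; linarith
          · rw [hbdef, max_eq_left h]; linarith
        linarith
      · have : -(t₀ + V) < s := lt_of_le_of_lt (le_max_left _ 0) hlow
        linarith
      · have heq : s • u n - (-s) • v = s • (u n - -v) := by
          rw [smul_sub, smul_neg, neg_smul]
        rw [heq, norm_smul, Real.norm_eq_abs, abs_of_nonneg hs0]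
        have hch : ‖u n - -v‖ ≤ gdist (u n) (-v) := chord_le_gdist _ _ (hu n) hvn
        calc s * ‖u n - -v‖ ≤ (b + L) * (ε / (b + L)) :=
              mul_le_mul hhigh (hch.trans hgd) (norm_nonneg _) hbL0.le
          _ = ε := mul_div_cancel₀ ε hbL0.ne'
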